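/- With C_p-Mackey functor data as follows: A_p = (ℤ², ℤ, res(a,b) = a + p·b, tr(c) = (0, c)) and L_p = (ℤ, ℤ, res = multiplication by p, tr = id), with the inclusion ι : L_p → A_p given by ι_G(n) = (0, n) and ι_e = id. Then: (1) every endomorphism of L_p is of the form (multiplication by m, multiplication by m) for a unique integer m; (2) an endomorphism of L_p given by m extends along ι to a morphism A_p → L_p if and only if p divides m. Consequently the cokernel of the restriction map Hom(A_p, L_p) → Hom(L_p, L_p) ≅ ℤ is cyclic of order p. -/
import Mathlib


/-- With `A_p = (ℤ², ℤ, res (a,b) = a + p·b, tr c = (0,c))` and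
`L_p = (ℤ, ℤ, res = p·, tr = id)` and the inclusion `ι : L_p → A_p` given by
`ι_G n = (0, n)`, `ι_e = id`: (1) every endomorphism of `L_p` is multiplication by a
unique integer `m` at both levels; (2) the endomorphism `m` extends along `ι` to a
morphism `A_p → L_p` iff `p ∣ m`; consequently the cokernel of
`Hom(A_p, L_p) → Hom(L_p, L_p) ≅ ℤ` is cyclic of order `p`. -/
theorem stmt_11 (p : ℕ) (hp : 0 < p)
    (resA : ℤ × ℤ →+ ℤ) (hresA : ∀ a b : ℤ, resA (a, b) = a + p * b)
    (trA : ℤ →+ ℤ × ℤ) (htrA : ∀ c : ℤ, trA c = (0, c))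
    (resL trL : ℤ →+ ℤ) (hresL : ∀ n : ℤ, resL n = p * n) (htrL : ∀ n : ℤ, trL n = n)
    (ιG : ℤ →+ ℤ × ℤ) (hιG : ∀ n : ℤ, ιG n = (0, n)) :
    (∀ fG fe : ℤ →+ ℤ, fe.comp resL = resL.comp fG → fG.comp trL = trL.comp fe →
      ∃! m : ℤ, (∀ n, fG n = m * n) ∧ (∀ n, fe n = m * n)) ∧
    (∀ m : ℤ,
      ((∃ (gG : ℤ × ℤ →+ ℤ) (ge : ℤ →+ ℤ),
          ge.comp resA = resL.comp gG ∧ gG.comp trA = trL.comp ge ∧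
          (∀ n : ℤ, gG (ιG n) = m * n) ∧ (∀ n : ℤ, ge n = m * n)) ↔ (p : ℤ) ∣ m)) ∧
    Nonempty ((ℤ ⧸ AddSubgroup.zmultiples ((p : ℤ))) ≃+ ZMod p) := by
  refine ⟨?_, ?_, ⟨Int.quotientZMultiplesNatEquivZMod p⟩⟩
  · intro fG fe _ h2
    have hfe : ∀ n, fG n = fe n := by
      intro n
      have := congrArg (fun f : ℤ →+ ℤ => f n) h2
      simpa [htrL] using this
    refine ⟨fG 1, ⟨fun n => ?_, fun n => ?_⟩, ?_⟩
    · have := (fG.toIntLinearMap).map_smul n 1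
      simpa [mul_comm] using this
    · rw [← hfe]
      have := (fG.toIntLinearMap).map_smul n 1
      simpa [mul_comm] using this
    · rintro m ⟨hm, -⟩
      simpa using (hm 1).symm
  · intro m
    constructor
    · rintro ⟨gG, ge, hres, -, hι, hge⟩
      have := congrArg (fun f : ℤ × ℤ →+ ℤ => f ((1 : ℤ), (0 : ℤ))) hres
      simp only [AddMonoidHom.comp_apply] at this
      rw [hresA, hresL, hge] at this
      exact ⟨gG (1, 0), by simpa using this⟩
    · rintro ⟨k, rfl⟩
      refine ⟨(zmultiplesHom ℤ k).comp (AddMonoidHom.fst ℤ ℤ) +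
          (zmultiplesHom ℤ ((p : ℤ) * k)).comp (AddMonoidHom.snd ℤ ℤ),
        zmultiplesHom ℤ ((p : ℤ) * k), ?_, ?_, ?_, ?_⟩
      · ext x
        obtain ⟨a, b⟩ := x
        simp [hresA, hresL, zmultiplesHom_apply]
        ring
      · ext c
        simp [htrA, htrL, zmultiplesHom_apply]
      · intro n
        simp [hιG, zmultiplesHom_apply]
        ring
      · intro n
        simp [zmultiplesHom_apply]
        ring
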